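/- Consider a process on a finite tree where each agent i has private signal x_i and deterministic update functions g_i^t, and the coupled 'zombie' process where agent i's trajectory is replaced by a fixed sequence τ_i and the state of the world is fixed to s, with the same private signals. Then on the event that τ_i^t = g_i^t(x_i, σ_{∂i}^{t-1}) (the zombie's actions coincide with the rational actions), the trajectories of all other agents up to time t are identical in the two processes; consequently P(σ_{∂i}^{t-1} = ω | s, x_i)·1[τ_i^t = g_i^t(x_i, ω)] = Q(σ_{∂i}^{t-1} = ω | τ_i, s)·1[τ_i^t = g_i^t(x_i, ω)] for every ω. -/

import Mathlib

/-- Coupling of the original process and the `zombie` process on a tree: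
on the event that the zombie's fixed trajectory `τ` coincides with the
rational actions `g_i^t(x_i, σ_{∂i}^{t-1})`, the conditional law (given `s`
and `x_i = ξ`) of the neighbors' trajectories in the original process equals
their law in the zombie process. Here `traj` is the original deterministic
dynamics, `ztraj` the dynamics with agent `i` replaced by a zombie playing
`τ`, `ν v` the conditional private-signal distribution (given the fixed true
state `s`), and probabilities are sums of products of signal weights. -/
theorem zombie_coupling {V X A : Type*} [Fintype V] [DecidableEq V]
    [Fintype X] [DecidableEq X] [DecidableEq A]
    (G : SimpleGraph V) [DecidableRel G.Adj] (htree : G.IsTree)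
    (upd : V → X → (V → ℕ → A) → ℕ → A)
    (hloc : ∀ v xv (h h' : V → ℕ → A) (t : ℕ),
      (∀ j, G.Adj v j ∨ j = v → ∀ t' < t, h j t' = h' j t') →
      upd v xv h t = upd v xv h' t)
    (traj : (V → X) → V → ℕ → A)
    (htraj : ∀ x v t, traj x v t = upd v (x v) (fun j t' => traj x j t') t)
    (i : V) (τ : ℕ → A)
    (ztraj : (V → X) → V → ℕ → A)
    (hz1 : ∀ x t, ztraj x i t = τ t)
    (hz2 : ∀ x v t, v ≠ i →
      ztraj x v t = upd v (x v) (fun j t' => ztraj x j t') t)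
    (ν : V → X → ℝ) (hν : ∀ v χ, 0 ≤ ν v χ) (hν1 : ∀ v, ∑ χ, ν v χ = 1)
    (ξ : X) (ω : V → ℕ → A) (t : ℕ)
    (hconsistent : ∀ t' ≤ t, τ t' =
      upd i ξ (fun j t'' => if j = i then τ t'' else ω j t'') t') :
    (∑ x : V → X,
        if x i = ξ ∧ ∀ j ∈ G.neighborFinset i, ∀ t' < t, traj x j t' = ω j t'
        then ∏ v ∈ Finset.univ.erase i, ν v (x v) else 0) =
    (∑ x : V → X,
        if x i = ξ ∧ ∀ j ∈ G.neighborFinset i, ∀ t' < t, ztraj x j t' = ω j t'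
        then ∏ v ∈ Finset.univ.erase i, ν v (x v) else 0) := by
  refine Finset.sum_congr rfl fun x _ => ?_
  by_cases hξ : x i = ξ
  · -- key coupling lemma
    have key : ∀ (hE : ∀ j ∈ G.neighborFinset i, ∀ t' < t,
          traj x j t' = ω j t' ∨ ztraj x j t' = ω j t'),
        ∀ t', t' ≤ t → ∀ v, traj x v t' = ztraj x v t' := by
      intro hE t'
      induction t' using Nat.strong_induction_on with
      | _ t' IH =>
        intro ht' v
        by_cases hv : v = i
        · subst hv
          rw [hz1, htraj, hξ, hconsistent t' ht']
          refine hloc v ξ _ _ t' ?_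
          intro j hj t'' ht''
          rcases hj with hj | hj
          · have hji : j ≠ v := (G.ne_of_adj hj).symm
            simp only [hji, if_neg hji]
            rcases hE j (by simpa [SimpleGraph.mem_neighborFinset] using hj) t''
                (lt_of_lt_of_le ht'' ht') with h | h
            · exact h
            · rw [← h]; exact IH t'' ht'' (le_trans (le_of_lt ht'') ht') j
          · subst hj
            have := IH t'' ht'' (le_trans (le_of_lt ht'') ht') j
            simp [this, hz1]
        · rw [htraj, hz2 x v t' hv]
          refine hloc v (x v) _ _ t' ?_
          intro j _ t'' ht''
          exact IH t'' ht'' (le_trans (le_of_lt ht'') ht') j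
    congr 1
    apply propext
    constructor
    · rintro ⟨_, hω⟩
      refine ⟨hξ, fun j hj t' ht' => ?_⟩
      rw [← key (fun j hj t' ht' => Or.inl (hω j hj t' ht')) t' (le_of_lt ht') j]
      exact hω j hj t' ht'
    · rintro ⟨_, hω⟩
      refine ⟨hξ, fun j hj t' ht' => ?_⟩
      rw [key (fun j hj t' ht' => Or.inr (hω j hj t' ht')) t' (le_of_lt ht') j]
      exact hω j hj t' ht'
  · simp [hξ]
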